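/- arXiv:2108.08567 — 2 statements merged into one kernel-verified Lean document; each statement's English description precedes it below -/
import Mathlib

section
/- Let α be a badly approximable real number and s > 1. Then the Dirichlet series ∑_{n=1}^{∞} 1/(⟨nα⟩ · n^s) converges, where ⟨x⟩ denotes the distance from x to the nearest integer. -/
open Real Finset

/-- Distance from `x` to the nearest integer. -/
noncomputable def distNearestInt (x : ℝ) : ℝ := |x - round x|


lemma dni_nonneg (x : ℝ) : 0 ≤ distNearestInt x := abs_nonneg _

lemma dni_le_half (x : ℝ) : distNearestInt x ≤ 1/2 := abs_sub_round x

lemma dni_le_abs_sub_int (x : ℝ) (k : ℤ) : distNearestInt x ≤ |x - k| := by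
  rcases eq_or_ne k (round x) with rfl | hk
  · exact le_of_eq rfl
  · have h1 : (1:ℝ) ≤ |((round x : ℤ) : ℝ) - (k:ℝ)| := by
      rw [← Int.cast_sub, ← Int.cast_abs]
      exact_mod_cast Int.one_le_abs (sub_ne_zero.2 (Ne.symm hk))
    have h2 := abs_sub_round x
    have h3 : |((round x : ℤ) : ℝ) - (k:ℝ)| ≤ |x - round x| + |x - k| := by
      have e : ((round x : ℤ) : ℝ) - k = (x - k) - (x - round x) := by ring
      rw [e]
      simpa [add_comm] using abs_sub (x - (k:ℝ)) (x - ((round x : ℤ) : ℝ))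
    unfold distNearestInt
    linarith

lemma dni_min_le (x y : ℝ) :
    min (distNearestInt (x - y)) (distNearestInt (x + y)) ≤
      |distNearestInt x - distNearestInt y| := by
  set a := x - round x with ha
  set b := y - round y with hb
  have hdx : distNearestInt x = |a| := rfl
  have hdy : distNearestInt y = |b| := rfl
  have h1 : distNearestInt (x - y) ≤ |a - b| := by
    have h := dni_le_abs_sub_int (x - y) (round x - round y)
    rw [Int.cast_sub] at h
    have e : x - y - ((round x : ℝ) - (round y : ℝ)) = a - b := by rw [ha, hb]; ring
    rwa [e] at h
  have h2 : distNearestInt (x + y) ≤ |a + b| := by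
    have h := dni_le_abs_sub_int (x + y) (round x + round y)
    rw [Int.cast_add] at h
    have e : x + y - ((round x : ℝ) + (round y : ℝ)) = a + b := by rw [ha, hb]; ring
    rwa [e] at h
  rcases le_or_gt 0 a with ha0 | ha0 <;> rcases le_or_gt 0 b with hb0 | hb0
  · have e : |distNearestInt x - distNearestInt y| = |a - b| := by
      rw [hdx, hdy, abs_of_nonneg ha0, abs_of_nonneg hb0]
    exact (min_le_left _ _).trans (h1.trans e.symm.le)
  · have e : |distNearestInt x - distNearestInt y| = |a + b| := by
      rw [hdx, hdy, abs_of_nonneg ha0, abs_of_neg hb0, sub_neg_eq_add]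
    exact (min_le_right _ _).trans (h2.trans e.symm.le)
  · have e : |distNearestInt x - distNearestInt y| = |a + b| := by
      rw [hdx, hdy, abs_of_neg ha0, abs_of_nonneg hb0,
        show -a - b = -(a + b) by ring, abs_neg]
    exact (min_le_right _ _).trans (h2.trans e.symm.le)
  · have e : |distNearestInt x - distNearestInt y| = |a - b| := by
      rw [hdx, hdy, abs_of_neg ha0, abs_of_neg hb0,
        show -a - -b = -(a - b) by ring, abs_neg]
    exact (min_le_left _ _).trans (h1.trans e.symm.le)

lemma harmonic_le_log (M : ℕ) : ∑ j ∈ Icc 1 M, (1:ℝ)/j ≤ 1 + Real.log M := by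
  induction M with
  | zero => simp
  | succ M ih =>
    rcases Nat.eq_zero_or_pos M with rfl | hM
    · norm_num
    · rw [Finset.sum_Icc_succ_top (by omega : 1 ≤ M + 1)]
      have hM0 : (0:ℝ) < M := by exact_mod_cast hM
      have h1 : Real.log ((M:ℝ)/(M+1)) ≤ (M:ℝ)/(M+1) - 1 :=
        Real.log_le_sub_one_of_pos (by positivity)
      rw [Real.log_div (by positivity) (by positivity)] at h1
      have e : (M:ℝ)/(M+1) - 1 = -(1/(M+1)) := by field_simp; ring
      rw [e] at h1
      push_cast
      push_cast at ih
      linarith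

lemma block_bound (α c : ℝ) (hc : 0 < c)
    (hdl : ∀ m : ℕ, 0 < m → c / m ≤ distNearestInt (m * α))
    (hsep : ∀ m n : ℕ, 0 < m → 0 < n → m ≠ n →
      c / ((m:ℝ) + n) ≤ |distNearestInt ((m:ℝ)*α) - distNearestInt ((n:ℝ)*α)|)
    (N : ℕ) (hN : 1 ≤ N) :
    ∑ m ∈ Finset.Icc 1 N, 1 / distNearestInt ((m:ℝ) * α) ≤
      (2*N/c) * (1 + Real.log ((N:ℝ)/c + 1)) := by
  have hN0 : (0:ℝ) < N := by exact_mod_cast hN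
  set D := c / (2*N) with hD
  have hD0 : 0 < D := by positivity
  set g : ℕ → ℕ := fun m => ⌊distNearestInt ((m:ℝ)*α) / D⌋₊ with hg
  set M := ⌊(N:ℝ)/c⌋₊ with hM
  have hdpos : ∀ m : ℕ, 0 < m → 0 < distNearestInt ((m:ℝ) * α) := by
    intro m hm
    have hm0 : (0:ℝ) < m := by exact_mod_cast hm
    exact lt_of_lt_of_le (by positivity) (hdl m hm)
  have hgD : ∀ m ∈ Finset.Icc 1 N, (g m : ℝ) * D ≤ distNearestInt ((m:ℝ)*α) := by
    intro m hm
    have : (g m : ℝ) ≤ distNearestInt ((m:ℝ)*α) / D :=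
      Nat.floor_le (div_nonneg (dni_nonneg _) hD0.le)
    calc (g m : ℝ) * D ≤ (distNearestInt ((m:ℝ)*α) / D) * D := by
          exact mul_le_mul_of_nonneg_right this hD0.le
      _ = distNearestInt ((m:ℝ)*α) := by field_simp
  have hg_mem : ∀ m ∈ Finset.Icc 1 N, g m ∈ Finset.Icc 1 M := by
    intro m hm
    rw [Finset.mem_Icc] at hm ⊢
    constructor
    ·
      rw [hg]
      apply Nat.le_floor
      rw [Nat.cast_one, le_div_iff₀ hD0]
      have h1 : c / N ≤ distNearestInt ((m:ℝ)*α) := by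
        refine le_trans ?_ (hdl m (by omega))
        apply div_le_div_of_nonneg_left hc.le (by exact_mod_cast hm.1)
        exact_mod_cast hm.2
      have : D ≤ c / N := by
        rw [hD, div_le_div_iff₀ (by positivity) hN0]
        nlinarith
      linarith
    · -- g m ≤ M
      rw [hg, hM]
      apply Nat.floor_le_floor
      have h1 : distNearestInt ((m:ℝ)*α) ≤ 1/2 := dni_le_half _
      rw [div_le_div_iff₀ hD0 hc]
      rw [hD]
      have : distNearestInt ((m:ℝ)*α) * c ≤ (1/2) * c := by nlinarith
      calc distNearestInt ((m:ℝ)*α) * c ≤ (1/2) * c := this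
        _ = (N:ℝ) * (c / (2*N)) := by field_simp
  have hg_inj : Set.InjOn g (Finset.Icc 1 N) := by
    intro m hm n hn hmn
    by_contra hne
    rw [Finset.coe_Icc, Set.mem_Icc] at hm hn
    have hsep' := hsep m n (by omega) (by omega) hne
    have hub : |distNearestInt ((m:ℝ)*α) - distNearestInt ((n:ℝ)*α)| < D := by
      have f1 : (g m : ℝ) * D ≤ distNearestInt ((m:ℝ)*α) :=
        hgD m (Finset.mem_Icc.2 ⟨hm.1, hm.2⟩)
      have f2 : (g n : ℝ) * D ≤ distNearestInt ((n:ℝ)*α) :=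
        hgD n (Finset.mem_Icc.2 ⟨hn.1, hn.2⟩)
      have f3 : distNearestInt ((m:ℝ)*α) < ((g m : ℝ) + 1) * D := by
        have : distNearestInt ((m:ℝ)*α) / D < (g m : ℝ) + 1 :=
          Nat.lt_floor_add_one (distNearestInt ((m:ℝ)*α) / D)
        calc distNearestInt ((m:ℝ)*α) = (distNearestInt ((m:ℝ)*α) / D) * D := by field_simp
          _ < ((g m : ℝ) + 1) * D := by
              exact mul_lt_mul_of_pos_right this hD0
      have f4 : distNearestInt ((n:ℝ)*α) < ((g n : ℝ) + 1) * D := by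
        have : distNearestInt ((n:ℝ)*α) / D < (g n : ℝ) + 1 :=
          Nat.lt_floor_add_one (distNearestInt ((n:ℝ)*α) / D)
        calc distNearestInt ((n:ℝ)*α) = (distNearestInt ((n:ℝ)*α) / D) * D := by field_simp
          _ < ((g n : ℝ) + 1) * D := by
              exact mul_lt_mul_of_pos_right this hD0
      rw [hmn] at f1 f3
      rw [abs_lt]
      constructor <;> nlinarith
    have hlb : D ≤ c / ((m:ℝ) + n) := by
      rw [hD]
      have hm0 : (0:ℝ) < m := by exact_mod_cast hm.1
      have hn0 : (0:ℝ) < n := by exact_mod_cast hn.1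
      apply div_le_div_of_nonneg_left hc.le (by linarith)
      have : (m:ℝ) ≤ N := by exact_mod_cast hm.2
      have : (n:ℝ) ≤ N := by exact_mod_cast hn.2
      push_cast
      linarith
    linarith [hlb.trans hsep']
  have hbound : ∀ m ∈ Finset.Icc 1 N, 1 / distNearestInt ((m:ℝ)*α) ≤ (1/D) * (1 / (g m : ℝ)) := by
    intro m hm
    have h1 := hgD m hm
    have hg1 : 1 ≤ g m := (Finset.mem_Icc.1 (hg_mem m hm)).1
    have hg0 : (0:ℝ) < g m := by exact_mod_cast hg1
    have hgD0 : 0 < (g m : ℝ) * D := by positivity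
    calc 1 / distNearestInt ((m:ℝ)*α) ≤ 1 / ((g m : ℝ) * D) :=
          one_div_le_one_div_of_le hgD0 h1
      _ = (1/D) * (1 / (g m : ℝ)) := by rw [one_div_mul_one_div, mul_comm]
  have himg : (Finset.Icc 1 N).image g ⊆ Finset.Icc 1 M := Finset.image_subset_iff.2 hg_mem
  have hMlog : Real.log M ≤ Real.log ((N:ℝ)/c + 1) := by
    rcases Nat.eq_zero_or_pos M with hM0 | hM0
    · rw [hM0]
      simp only [Nat.cast_zero, Real.log_zero]
      apply Real.log_nonneg
      have : 0 ≤ (N:ℝ)/c := by positivity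
      linarith
    · apply Real.log_le_log (by exact_mod_cast hM0)
      have := Nat.floor_le (show (0:ℝ) ≤ (N:ℝ)/c by positivity)
      rw [← hM] at this
      linarith
  have hDinv : 1/D = 2*(N:ℝ)/c := by rw [hD]; field_simp
  calc ∑ m ∈ Finset.Icc 1 N, 1 / distNearestInt ((m:ℝ) * α)
      ≤ ∑ m ∈ Finset.Icc 1 N, (1/D) * (1 / (g m : ℝ)) := Finset.sum_le_sum hbound
    _ = (1/D) * ∑ m ∈ Finset.Icc 1 N, 1 / (g m : ℝ) := by rw [Finset.mul_sum]
    _ = (1/D) * ∑ j ∈ (Finset.Icc 1 N).image g, 1 / (j : ℝ) := by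
        rw [Finset.sum_image (fun x hx y hy hxy => hg_inj hx hy hxy)]
    _ ≤ (1/D) * ∑ j ∈ Finset.Icc 1 M, 1 / (j : ℝ) := by
        apply mul_le_mul_of_nonneg_left _ (by positivity)
        apply Finset.sum_le_sum_of_subset_of_nonneg himg
        intro j _ _
        positivity
    _ ≤ (1/D) * (1 + Real.log M) := by
        apply mul_le_mul_of_nonneg_left (harmonic_le_log M) (by positivity)
    _ ≤ (2*N/c) * (1 + Real.log ((N:ℝ)/c + 1)) := by
        rw [hDinv]
        apply mul_le_mul_of_nonneg_left (by linarith) (by positivity)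

/-- For badly approximable `α` and `s > 1`, the series
`∑_{n≥1} 1/(⟨nα⟩ nˢ)` converges. -/
theorem dirichlet_series_badly_approximable_summable (α : ℝ)
    (hα : ∃ c > 0, ∀ q : ℕ, 0 < q → c ≤ (q : ℝ) * distNearestInt (q * α))
    (s : ℝ) (hs : 1 < s) :
    Summable (fun n : ℕ =>
      1 / (distNearestInt ((n + 1 : ℝ) * α) * ((n + 1 : ℝ)) ^ s)) := by
  obtain ⟨c, hc, h⟩ := hα
  have hdl : ∀ m : ℕ, 0 < m → c / m ≤ distNearestInt (m * α) := by
    intro m hm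
    have hm0 : (0:ℝ) < m := by exact_mod_cast hm
    rw [div_le_iff₀ hm0]
    have := h m hm
    linarith [this]
  have hdpos : ∀ m : ℕ, 0 < m → 0 < distNearestInt ((m:ℝ) * α) := by
    intro m hm
    have hm0 : (0:ℝ) < m := by exact_mod_cast hm
    exact lt_of_lt_of_le (by positivity) (hdl m hm)
  have hsep : ∀ m n : ℕ, 0 < m → 0 < n → m ≠ n →
      c / ((m:ℝ) + n) ≤ |distNearestInt ((m:ℝ)*α) - distNearestInt ((n:ℝ)*α)| := by
    have key : ∀ m n : ℕ, 0 < n → n < m →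
        c / ((m:ℝ) + n) ≤ |distNearestInt ((m:ℝ)*α) - distNearestInt ((n:ℝ)*α)| := by
      intro m n hn hnm
      have hn0 : (0:ℝ) < n := by exact_mod_cast hn
      have hm0 : (0:ℝ) < m := by exact_mod_cast (hn.trans hnm)
      have hmn0 : (0:ℝ) < (m:ℝ) - n := by
        have : (n:ℝ) < m := by exact_mod_cast hnm
        linarith
      have h1 : c / ((m:ℝ) - n) ≤ distNearestInt ((m:ℝ)*α - (n:ℝ)*α) := by
        have h' := hdl (m - n) (by omega)
        rw [Nat.cast_sub hnm.le] at h'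
        rw [show (m:ℝ)*α - (n:ℝ)*α = ((m:ℝ) - n)*α by ring]
        exact h'
      have h2 : c / ((m:ℝ) + n) ≤ distNearestInt ((m:ℝ)*α + (n:ℝ)*α) := by
        have h' := hdl (m + n) (by omega)
        rw [Nat.cast_add] at h'
        rw [show (m:ℝ)*α + (n:ℝ)*α = ((m:ℝ) + n)*α by ring]
        exact h'
      have h4 : c / ((m:ℝ) + n) ≤ c / ((m:ℝ) - n) := by
        apply div_le_div_of_nonneg_left hc.le hmn0
        linarith
      have h3 := dni_min_le ((m:ℝ)*α) ((n:ℝ)*α)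
      exact le_trans (le_min (h4.trans h1) h2) h3
    intro m n hm hn hmn
    rcases lt_or_gt_of_ne hmn with h' | h'
    · rw [abs_sub_comm, show (m:ℝ) + n = (n:ℝ) + m by ring]
      exact key n m hm h'
    · exact key m n hn h'
  have block := block_bound α c hc hdl hsep
  -- the summand as a function of m ≥ 1
  set w : ℕ → ℝ := fun m => 1 / (distNearestInt ((m:ℝ)*α) * (m:ℝ)^s) with hw
  have hw_nonneg : ∀ m, 0 ≤ w m := by
    intro m
    apply div_nonneg one_pos.le
    exact mul_nonneg (dni_nonneg _) (Real.rpow_nonneg (by positivity) s)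
  set r : ℝ := (2:ℝ)^(1 - s) with hr
  have hr0 : 0 ≤ r := Real.rpow_nonneg (by norm_num) _
  have hr1 : r < 1 := Real.rpow_lt_one_of_one_lt_of_neg one_lt_two (by linarith)
  set L : ℝ := 2 + Real.log 2 + Real.log (1/c + 1) with hL
  have hL0 : 0 ≤ L := by
    have h1 := Real.log_nonneg (show (1:ℝ) ≤ 2 by norm_num)
    have h2 : 0 ≤ Real.log (1/c + 1) := Real.log_nonneg (by
      have : 0 ≤ 1/c := by positivity
      linarith)
    rw [hL]
    linarith
  set Maj : ℕ → ℝ := fun k => (4*L/c) * (((k:ℝ)+1) * r^k) with hMaj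
  have hMaj_nonneg : ∀ k, 0 ≤ Maj k := by
    intro k
    apply mul_nonneg (by positivity) (mul_nonneg (by positivity) (pow_nonneg hr0 k))
  -- block estimate
  have hV : ∀ k : ℕ, ∑ m ∈ Finset.Ioc (2^k - 1) (2^(k+1) - 1), w m ≤ Maj k := by
    intro k
    set P : ℝ := ((2:ℝ)^k)^s with hP
    have hP0 : 0 < P := Real.rpow_pos_of_pos (by positivity) s
    set Nk : ℕ := 2^(k+1) - 1 with hNk
    have hNk1 : 1 ≤ Nk := by
      have : (2:ℕ) ≤ 2^(k+1) := by
        calc (2:ℕ) = 2^1 := by norm_num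
          _ ≤ 2^(k+1) := Nat.pow_le_pow_right (by norm_num) (by omega)
      omega
    set Q : ℝ := (2:ℝ)^(k+1) with hQ
    have hQ0 : (0:ℝ) < Q := by positivity
    have hNkQ : (Nk:ℝ) ≤ Q := by
      rw [hNk, hQ]
      have h2 : (1:ℕ) ≤ 2^(k+1) := Nat.one_le_two_pow
      rw [Nat.cast_sub h2]
      push_cast
      linarith
    have h1Q : (1:ℝ) ≤ Q := by
      rw [hQ]
      exact one_le_pow₀ (by norm_num : (1:ℝ) ≤ 2)
    -- step 1: pointwise bound on the block
    have step1 : ∀ m ∈ Finset.Ioc (2^k - 1) (2^(k+1) - 1), w m ≤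
        (1/P) * (1 / distNearestInt ((m:ℝ)*α)) := by
      intro m hm
      rw [Finset.mem_Ioc] at hm
      have hm1 : 1 ≤ m := by
        have : (1:ℕ) ≤ 2^k := Nat.one_le_two_pow
        omega
      have hm2k : (2:ℕ)^k ≤ m := by omega
      have hd0 := hdpos m hm1
      have hms : P ≤ (m:ℝ)^s := by
        rw [hP]
        apply Real.rpow_le_rpow (by positivity) _ (by linarith)
        exact_mod_cast hm2k
      have hmsl : (0:ℝ) < (m:ℝ)^s := Real.rpow_pos_of_pos (by exact_mod_cast hm1) s
      rw [hw]
      calc 1 / (distNearestInt ((m:ℝ)*α) * (m:ℝ)^s)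
          ≤ 1 / (distNearestInt ((m:ℝ)*α) * P) := by
            apply one_div_le_one_div_of_le (by positivity)
            exact mul_le_mul_of_nonneg_left hms (dni_nonneg _)
        _ = (1/P) * (1 / distNearestInt ((m:ℝ)*α)) := by
            rw [one_div_mul_one_div, mul_comm]
    -- step 2 + 3: use block bound
    have step2 : ∑ m ∈ Finset.Ioc (2^k - 1) (2^(k+1) - 1 : ℕ), 1 / distNearestInt ((m:ℝ)*α)
        ≤ ∑ m ∈ Finset.Icc 1 Nk, 1 / distNearestInt ((m:ℝ)*α) := by
      apply Finset.sum_le_sum_of_subset_of_nonneg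
      · intro m hm
        rw [Finset.mem_Ioc] at hm
        rw [Finset.mem_Icc]
        have : (1:ℕ) ≤ 2^k := Nat.one_le_two_pow
        omega
      · intro m _ _
        exact div_nonneg one_pos.le (dni_nonneg _)
    have step3 := block Nk hNk1
    -- log estimate
    have hlog : Real.log ((Nk:ℝ)/c + 1) ≤ 1 + ((k:ℝ)+1) * Real.log 2 + Real.log (1/c + 1) := by
      have harg : (0:ℝ) < (Nk:ℝ)/c + 1 := by positivity
      have hle : (Nk:ℝ)/c + 1 ≤ Q * (1/c + 1) := by
        have e : Q * (1/c + 1) = Q/c + Q := by field_simp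
        rw [e]
        have : (Nk:ℝ)/c ≤ Q/c := (div_le_div_iff_of_pos_right hc).2 hNkQ
        linarith
      have := Real.log_le_log harg hle
      rw [Real.log_mul (by positivity) (by positivity)] at this
      rw [hQ, Real.log_pow] at this
      push_cast at this
      have hl2 := Real.log_nonneg (show (1:ℝ) ≤ 2 by norm_num)
      linarith
    -- rpow algebra : Q / P = 2 * r ^ k
    have hrk : r ^ k = (2:ℝ) ^ ((1 - s) * (k:ℝ)) := by
      rw [hr, ← Real.rpow_natCast ((2:ℝ)^(1-s)) k, ← Real.rpow_mul (by norm_num : (0:ℝ) ≤ 2)]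
    have hPe : P = (2:ℝ) ^ ((k:ℝ) * s) := by
      rw [hP, ← Real.rpow_natCast (2:ℝ) k, ← Real.rpow_mul (by norm_num : (0:ℝ) ≤ 2)]
    have hQe : Q = (2:ℝ) ^ (((k:ℝ) + 1)) := by
      rw [hQ, ← Real.rpow_natCast (2:ℝ) (k+1)]
      push_cast
      ring_nf
    have hQP : Q = 2 * r ^ k * P := by
      rw [hQe, hrk, hPe, show ((k:ℝ) + 1) = 1 + ((1 - s) * (k:ℝ) + (k:ℝ) * s) by ring,
        Real.rpow_add (by norm_num : (0:ℝ) < 2), Real.rpow_add (by norm_num : (0:ℝ) < 2),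
        Real.rpow_one]
      ring
    -- nonnegativity facts
    have hlog0 : 0 ≤ Real.log ((Nk:ℝ)/c + 1) := by
      apply Real.log_nonneg
      have : (0:ℝ) ≤ (Nk:ℝ)/c := by positivity
      linarith
    have hkL : 1 + Real.log ((Nk:ℝ)/c + 1) ≤ ((k:ℝ) + 1) * L := by
      rw [hL]
      have hk0 : (0:ℝ) ≤ k := Nat.cast_nonneg k
      have hl2 := Real.log_nonneg (show (1:ℝ) ≤ 2 by norm_num)
      have hl3 : 0 ≤ Real.log (1/c + 1) := Real.log_nonneg (by
        have : (0:ℝ) ≤ 1/c := by positivity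
        linarith)
      nlinarith [hlog]
    -- final assembly
    calc ∑ m ∈ Finset.Ioc (2^k - 1) (2^(k+1) - 1), w m
        ≤ ∑ m ∈ Finset.Ioc (2^k - 1) (2^(k+1) - 1 : ℕ),
            (1/P) * (1 / distNearestInt ((m:ℝ)*α)) := Finset.sum_le_sum step1
      _ = (1/P) * ∑ m ∈ Finset.Ioc (2^k - 1) (2^(k+1) - 1 : ℕ),
            1 / distNearestInt ((m:ℝ)*α) := by rw [Finset.mul_sum]
      _ ≤ (1/P) * ((2 * Nk / c) * (1 + Real.log ((Nk:ℝ)/c + 1))) := by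
          apply mul_le_mul_of_nonneg_left (step2.trans step3) (by positivity)
      _ ≤ (1/P) * ((2 * Q / c) * (((k:ℝ) + 1) * L)) := by
          apply mul_le_mul_of_nonneg_left _ (by positivity)
          apply mul_le_mul
          · apply (div_le_div_iff_of_pos_right hc).2
            linarith
          · exact hkL
          · linarith
          · positivity
      _ = Maj k := by
          rw [hMaj, hQP]
          have hP0' : P ≠ 0 := ne_of_gt hP0
          field_simp
          ring
  -- dyadic cover
  have cover : ∀ K : ℕ, ∑ m ∈ Finset.Ioc 0 (2^K - 1), w m =
      ∑ k ∈ Finset.range K, ∑ m ∈ Finset.Ioc (2^k - 1) (2^(k+1) - 1), w m := by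
    intro K
    induction K with
    | zero => simp
    | succ K ih =>
      rw [Finset.sum_range_succ, ← ih]
      have h1 : (0:ℕ) ≤ 2^K - 1 := by omega
      have h2 : (2:ℕ)^K - 1 ≤ 2^(K+1) - 1 := by
        have := Nat.pow_le_pow_right (show 1 ≤ 2 by norm_num) (Nat.le_succ K)
        omega
      exact (Finset.sum_Ioc_consecutive w h1 h2).symm
  -- summability of the majorant
  have hMaj_summable : Summable Maj := by
    have h1 : Summable (fun k : ℕ => (k:ℝ) * r^k) := by
      have := summable_pow_mul_geometric_of_norm_lt_one 1 (show ‖r‖ < 1 by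
        rw [Real.norm_eq_abs, abs_of_nonneg hr0]; exact hr1)
      simpa using this
    have h2 : Summable (fun k : ℕ => r^k) := summable_geometric_of_lt_one hr0 hr1
    have h3 : Summable (fun k : ℕ => ((k:ℝ)+1) * r^k) := by
      have := h1.add h2
      convert this using 2 with k
      ring
    exact h3.mul_left _
  -- partial sums bounded
  apply summable_of_sum_range_le (c := ∑' k, Maj k)
  · intro n
    apply div_nonneg one_pos.le
    exact mul_nonneg (dni_nonneg _) (Real.rpow_nonneg (by positivity) s)
  · intro n
    have e1 : ∑ i ∈ Finset.range n, 1 / (distNearestInt (((i:ℝ) + 1) * α) * ((i:ℝ) + 1) ^ s)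
        = ∑ m ∈ Finset.Ioc 0 n, w m := by
      rw [show Finset.Ioc 0 n = Finset.Ico 1 (n+1) by rfl, Finset.sum_Ico_eq_sum_range]
      simp only [Nat.add_sub_cancel]
      apply Finset.sum_congr rfl
      intro i _
      rw [hw]
      push_cast
      ring_nf
    rw [e1]
    have e2 : ∑ m ∈ Finset.Ioc 0 n, w m ≤ ∑ m ∈ Finset.Ioc 0 (2^n - 1), w m := by
      apply Finset.sum_le_sum_of_subset_of_nonneg
      · apply Finset.Ioc_subset_Ioc_right
        have := @Nat.lt_two_pow_self n
        omega
      · intro m _ _; exact hw_nonneg m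
    calc ∑ m ∈ Finset.Ioc 0 n, w m ≤ ∑ m ∈ Finset.Ioc 0 (2^n - 1), w m := e2
      _ = ∑ k ∈ Finset.range n, ∑ m ∈ Finset.Ioc (2^k - 1) (2^(k+1) - 1), w m := cover n
      _ ≤ ∑ k ∈ Finset.range n, Maj k := Finset.sum_le_sum (fun k _ => hV k)
      _ ≤ ∑' k, Maj k := Summable.sum_le_tsum _ (fun k _ => hMaj_nonneg k) hMaj_summable
end

section
/- For all integers M ≥ 0, N > M, and all real s > 1 and reals k ≠ 0, after the van der Corput differencing step one has the bound |∑_{n=M+1}^{N} e^{2πi θ n²}|² ≤ (N−M) + 2∑_{p=1}^{N−M−1} 1/|sin(2πθp)|, for any real θ with θp ∉ (1/2)ℤ for 1 ≤ p ≤ N−M−1. -/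
open Real Complex

noncomputable def ep (x : ℝ) : ℂ := Complex.exp (2 * Real.pi * Complex.I * (x : ℂ))

lemma ep_eq (x : ℝ) : ep x = Complex.exp (((2 * Real.pi * x : ℝ) : ℂ) * Complex.I) := by
  rw [ep]; congr 1; push_cast; ring

lemma ep_add (x y : ℝ) : ep (x + y) = ep x * ep y := by
  rw [ep, ep, ep, ← Complex.exp_add]; congr 1; push_cast; ring

lemma ep_re (x : ℝ) : (ep x).re = Real.cos (2 * Real.pi * x) := by
  rw [ep_eq, Complex.exp_ofReal_mul_I_re]

lemma norm_ep (x : ℝ) : ‖ep x‖ = 1 := by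
  rw [ep_eq, Complex.norm_exp]
  simp

lemma ep_conj (x : ℝ) : (starRingEnd ℂ) (ep x) = ep (-x) := by
  rw [ep_eq, ep_eq, ← Complex.exp_conj, map_mul, Complex.conj_I, Complex.conj_ofReal]
  congr 1; push_cast; ring

lemma ep_nat_mul (x : ℝ) (n : ℕ) : ep (x * n) = ep x ^ n := by
  rw [ep, ep, ← Complex.exp_nat_mul]; congr 1; push_cast; ring

lemma norm_ep_sub_one (x : ℝ) : ‖ep x - 1‖ = 2 * |Real.sin (Real.pi * x)| := by
  rw [ep_eq, Complex.norm_def]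
  have hns : Complex.normSq (Complex.exp (((2*Real.pi*x : ℝ):ℂ) * Complex.I) - 1)
      = 4 * Real.sin (Real.pi * x) ^ 2 := by
    rw [Complex.normSq_apply]
    rw [Complex.sub_re, Complex.sub_im, Complex.exp_ofReal_mul_I_re, Complex.exp_ofReal_mul_I_im]
    have h1 := Real.sin_sq_eq_half_sub (Real.pi * x)
    have h2 := Real.sin_sq_add_cos_sq (2 * Real.pi * x)
    have h3 : 2 * (Real.pi * x) = 2 * Real.pi * x := by ring
    rw [h3] at h1
    simp only [Complex.one_re, Complex.one_im]
    nlinarith [h1, h2]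
  rw [hns, show (4:ℝ) * Real.sin (Real.pi * x)^2 = (2*|Real.sin (Real.pi * x)|)^2 by
    rw [mul_pow, _root_.sq_abs]; ring]
  exact Real.sqrt_sq (by positivity)

lemma geom_bound (w : ℂ) (hw : ‖w‖ = 1) (hw1 : w ≠ 1) (a b : ℕ) :
    ‖∑ n ∈ Finset.Icc a b, w ^ n‖ ≤ 2 / ‖w - 1‖ := by
  have hw0 : ‖w - 1‖ ≠ 0 := by simpa [sub_eq_zero] using hw1
  have h2 : (0:ℝ) < ‖w-1‖ := lt_of_le_of_ne (norm_nonneg _) (Ne.symm hw0)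
  rcases lt_or_ge b a with hba | hab
  · rw [Finset.Icc_eq_empty (by omega)]
    simp only [Finset.sum_empty, norm_zero]
    positivity
  · rw [← Finset.Ico_add_one_right_eq_Icc, geom_sum_Ico hw1 (by omega)]
    rw [norm_div]
    rw [div_le_div_iff₀ h2 h2]
    have : ‖w ^ (b+1) - w ^ a‖ ≤ 2 := by
      calc ‖w ^ (b+1) - w ^ a‖ ≤ ‖w ^ (b+1)‖ + ‖w ^ a‖ := norm_sub_le _ _
        _ = 2 := by rw [norm_pow, norm_pow, hw]; norm_num
    nlinarith [this, h2]

lemma sin_ne_zero_of (θ : ℝ) (d : ℕ) (h : ∀ m : ℤ, θ * d ≠ (m:ℝ)/2) :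
    Real.sin (2 * Real.pi * θ * d) ≠ 0 := by
  intro h0
  rw [Real.sin_eq_zero_iff] at h0
  obtain ⟨n, hn⟩ := h0
  apply h n
  have hπ : Real.pi ≠ 0 := Real.pi_ne_zero
  have : Real.pi * (n : ℝ) = Real.pi * (2 * (θ * d)) := by ring_nf; ring_nf at hn; linarith
  have := mul_left_cancel₀ hπ this
  linarith

lemma inner_bound (θ : ℝ) (d a b : ℕ) (hsin : Real.sin (2*Real.pi*θ*d) ≠ 0) (had : d ≤ a) :
    ∑ n ∈ Finset.Icc a b, Real.cos (2*Real.pi*(θ*(n:ℝ)^2 - θ*(((n-d : ℕ)):ℝ)^2))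
      ≤ 1 / |Real.sin (2*Real.pi*θ*d)| := by
  set w := ep (2*θ*d) with hw
  have hwn : ‖w‖ = 1 := norm_ep _
  have hws : ‖w - 1‖ = 2 * |Real.sin (2*Real.pi*θ*d)| := by
    rw [hw, norm_ep_sub_one]
    congr 2; ring
  have hsinpos : (0:ℝ) < |Real.sin (2*Real.pi*θ*d)| := abs_pos.mpr hsin
  have hw1 : w ≠ 1 := by
    intro h
    rw [h] at hws
    simp only [sub_self, norm_zero] at hws
    nlinarith
  have step1 : ∀ n ∈ Finset.Icc a b,
      Real.cos (2*Real.pi*(θ*(n:ℝ)^2 - θ*(((n-d : ℕ)):ℝ)^2)) = (ep (-(θ*(d:ℝ)^2)) * w ^ n).re := by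
    intro n hn
    rw [Finset.mem_Icc] at hn
    have hdn : (((n - d : ℕ)):ℝ) = (n:ℝ) - (d:ℝ) := by
      push_cast [Nat.cast_sub (le_trans had hn.1)]; ring
    have : ep (-(θ*(d:ℝ)^2)) * w ^ n = ep (θ*(n:ℝ)^2 - θ*(((n-d : ℕ)):ℝ)^2) := by
      rw [hw, ← ep_nat_mul, ← ep_add]
      congr 1
      rw [hdn]; ring
    rw [this, ep_re]
  rw [Finset.sum_congr rfl step1, ← Complex.re_sum]
  calc (∑ n ∈ Finset.Icc a b, ep (-(θ*(d:ℝ)^2)) * w ^ n).re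
      ≤ ‖∑ n ∈ Finset.Icc a b, ep (-(θ*(d:ℝ)^2)) * w ^ n‖ := Complex.re_le_norm _
    _ = ‖∑ n ∈ Finset.Icc a b, w ^ n‖ := by
        rw [← Finset.mul_sum, norm_mul, norm_ep, one_mul]
    _ ≤ 2 / ‖w - 1‖ := geom_bound w hwn hw1 a b
    _ = 1 / |Real.sin (2*Real.pi*θ*d)| := by rw [hws]; field_simp

lemma diag_sum {a b : ℕ} (f : ℕ → ℕ → ℝ) :
    ∑ p ∈ (Finset.Icc a b ×ˢ Finset.Icc a b).filter (fun p => p.1 = p.2), f p.1 p.2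
      = ∑ n ∈ Finset.Icc a b, f n n := by
  apply Finset.sum_nbij' (fun p => p.1) (fun n => (n, n))
  · rintro ⟨x, y⟩ hp
    simp only [Finset.mem_filter, Finset.mem_product, Finset.mem_Icc] at hp
    simp only [Finset.mem_Icc]
    omega
  · intro n hn
    exact Finset.mem_filter.mpr ⟨Finset.mem_product.mpr ⟨hn, hn⟩, rfl⟩
  · rintro ⟨x, y⟩ hp
    simp only [Finset.mem_filter] at hp
    have h : x = y := hp.2
    dsimp only
    rw [h]
  · intro n _
    rfl
  · rintro ⟨x, y⟩ hp
    simp only [Finset.mem_filter, Finset.mem_product, Finset.mem_Icc] at hp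
    simp only []
    rw [hp.2]

lemma lower_sum {a b : ℕ} (f : ℕ → ℕ → ℝ) :
    ∑ p ∈ (Finset.Icc a b ×ˢ Finset.Icc a b).filter (fun p => p.2 < p.1), f p.1 p.2
      = ∑ d ∈ Finset.Icc 1 (b - a), ∑ n ∈ Finset.Icc (a + d) b, f n (n - d) := by
  rw [Finset.sum_sigma' (Finset.Icc 1 (b-a)) (fun d => Finset.Icc (a+d) b)
    (fun d n => f n (n - d))]
  apply Finset.sum_nbij' (fun p => (⟨p.1 - p.2, p.1⟩ : Σ _ : ℕ, ℕ)) (fun q => (q.2, q.2 - q.1))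
  · rintro ⟨x, y⟩ hp
    simp only [Finset.mem_filter, Finset.mem_product, Finset.mem_Icc] at hp
    dsimp only at hp ⊢
    simp only [Finset.mem_sigma, Finset.mem_Icc]
    omega
  · rintro ⟨d, n⟩ hq
    simp only [Finset.mem_sigma, Finset.mem_Icc] at hq
    dsimp only at hq ⊢
    simp only [Finset.mem_filter, Finset.mem_product, Finset.mem_Icc]
    omega
  · rintro ⟨x, y⟩ hp
    simp only [Finset.mem_filter, Finset.mem_product, Finset.mem_Icc] at hp
    dsimp only at hp ⊢
    have h : x - (x - y) = y := by omega
    rw [h]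
  · rintro ⟨d, n⟩ hq
    simp only [Finset.mem_sigma, Finset.mem_Icc] at hq
    dsimp only at hq ⊢
    have h : n - (n - d) = d := by omega
    rw [h]
  · rintro ⟨x, y⟩ hp
    simp only [Finset.mem_filter, Finset.mem_product, Finset.mem_Icc] at hp
    dsimp only at hp ⊢
    congr 1
    omega

lemma upper_sum {a b : ℕ} (f : ℕ → ℕ → ℝ) :
    ∑ p ∈ (Finset.Icc a b ×ˢ Finset.Icc a b).filter (fun p => p.1 < p.2), f p.1 p.2
      = ∑ d ∈ Finset.Icc 1 (b - a), ∑ n ∈ Finset.Icc (a + d) b, f (n - d) n := by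
  rw [Finset.sum_sigma' (Finset.Icc 1 (b-a)) (fun d => Finset.Icc (a+d) b)
    (fun d n => f (n - d) n)]
  apply Finset.sum_nbij' (fun p => (⟨p.2 - p.1, p.2⟩ : Σ _ : ℕ, ℕ)) (fun q => (q.2 - q.1, q.2))
  · rintro ⟨x, y⟩ hp
    simp only [Finset.mem_filter, Finset.mem_product, Finset.mem_Icc] at hp
    dsimp only at hp ⊢
    simp only [Finset.mem_sigma, Finset.mem_Icc]
    omega
  · rintro ⟨d, n⟩ hq
    simp only [Finset.mem_sigma, Finset.mem_Icc] at hq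
    dsimp only at hq ⊢
    simp only [Finset.mem_filter, Finset.mem_product, Finset.mem_Icc]
    omega
  · rintro ⟨x, y⟩ hp
    simp only [Finset.mem_filter, Finset.mem_product, Finset.mem_Icc] at hp
    dsimp only at hp ⊢
    have h : y - (y - x) = x := by omega
    rw [h]
  · rintro ⟨d, n⟩ hq
    simp only [Finset.mem_sigma, Finset.mem_Icc] at hq
    dsimp only at hq ⊢
    have h : n - (n - d) = d := by omega
    rw [h]
  · rintro ⟨x, y⟩ hp
    simp only [Finset.mem_filter, Finset.mem_product, Finset.mem_Icc] at hp
    dsimp only at hp ⊢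
    congr 1
    omega

/-- The key intermediate inequality in the van der Corput differencing for
quadratic phases: if `θp ∉ (1/2)ℤ` for `1 ≤ p ≤ N−M−1`, then
`|∑_{n=M+1}^N e^{2πiθn²}|² ≤ (N−M) + 2∑_{p=1}^{N−M−1} 1/|sin(2πθp)|`. -/
theorem vanDerCorput_differencing_quadratic (M N : ℕ) (hMN : M < N) (θ : ℝ)
    (hθ : ∀ p : ℕ, 1 ≤ p → p ≤ N - M - 1 → ∀ m : ℤ, θ * (p : ℝ) ≠ (m : ℝ) / 2) :
    ‖∑ n ∈ Finset.Icc (M + 1) N,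
        Complex.exp (2 * Real.pi * Complex.I * ((θ * (n : ℝ) ^ 2 : ℝ) : ℂ))‖ ^ 2 ≤
      ((N : ℝ) - (M : ℝ)) +
        2 * ∑ p ∈ Finset.Icc 1 (N - M - 1), 1 / |Real.sin (2 * Real.pi * θ * (p : ℝ))| := by
  set A := Finset.Icc (M + 1) N with hA
  set S := ∑ n ∈ A, ep (θ * (n : ℝ) ^ 2) with hS
  have hSeq : (∑ n ∈ A, Complex.exp (2 * Real.pi * Complex.I * ((θ * (n : ℝ) ^ 2 : ℝ) : ℂ))) = S := rfl
  rw [hSeq]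
  set f : ℕ → ℕ → ℝ := fun n m => Real.cos (2*Real.pi*(θ*(n:ℝ)^2 - θ*(m:ℝ)^2)) with hf
  -- Step 1: ‖S‖² = ∑∑ f
  have h1 : ((‖S‖ ^ 2 : ℝ) : ℂ) = S * (starRingEnd ℂ) S := by
    rw [Complex.mul_conj, Complex.normSq_eq_norm_sq]
  have h2 : S * (starRingEnd ℂ) S = ∑ p ∈ (A ×ˢ A), ep (θ*(p.1:ℝ)^2 - θ*(p.2:ℝ)^2) := by
    rw [hS, map_sum, Finset.sum_mul_sum, ← Finset.sum_product']
    apply Finset.sum_congr rfl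
    intro p _
    rw [ep_conj, ← ep_add, sub_eq_add_neg]
  have key : ‖S‖ ^ 2 = ∑ p ∈ (A ×ˢ A), f p.1 p.2 := by
    calc ‖S‖ ^ 2 = (((‖S‖ ^ 2 : ℝ) : ℂ)).re := (Complex.ofReal_re _).symm
      _ = (∑ p ∈ (A ×ˢ A), ep (θ*(p.1:ℝ)^2 - θ*(p.2:ℝ)^2)).re := by rw [h1, h2]
      _ = ∑ p ∈ (A ×ˢ A), f p.1 p.2 := by
          rw [Complex.re_sum]
          apply Finset.sum_congr rfl
          intro p _
          rw [ep_re]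
  rw [key]
  -- Step 2: split the double sum
  have split : ∑ p ∈ (A ×ˢ A), f p.1 p.2
      = (∑ p ∈ (A ×ˢ A).filter (fun p => p.1 = p.2), f p.1 p.2)
        + ((∑ p ∈ (A ×ˢ A).filter (fun p => p.2 < p.1), f p.1 p.2)
          + (∑ p ∈ (A ×ˢ A).filter (fun p => p.1 < p.2), f p.1 p.2)) := by
    rw [← Finset.sum_filter_add_sum_filter_not (A ×ˢ A) (fun p => p.1 = p.2)]
    congr 1
    rw [← Finset.sum_filter_add_sum_filter_not ((A ×ˢ A).filter (fun p => ¬ p.1 = p.2))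
      (fun p => p.2 < p.1), Finset.filter_filter, Finset.filter_filter]
    congr 1
    · apply Finset.sum_congr _ (fun _ _ => rfl)
      apply Finset.filter_congr
      intro p _
      omega
    · apply Finset.sum_congr _ (fun _ _ => rfl)
      apply Finset.filter_congr
      intro p _
      omega
  rw [split, diag_sum, lower_sum, upper_sum]
  -- diagonal
  have hdiag : ∑ n ∈ A, f n n = (N : ℝ) - (M : ℝ) := by
    have heq1 : ∀ n ∈ A, f n n = 1 := by
      intro n _
      simp [hf]
    rw [Finset.sum_congr rfl heq1, Finset.sum_const, nsmul_eq_mul, mul_one, hA, Nat.card_Icc]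
    have heq2 : N + 1 - (M + 1) = N - M := by omega
    rw [heq2, Nat.cast_sub (le_of_lt hMN)]
  -- symmetric lower/upper
  have hsym : ∀ d n : ℕ, f (n - d) n = f n (n - d) := by
    intro d n
    simp only [hf]
    rw [← Real.cos_neg (2*Real.pi*(θ*((n-d:ℕ):ℝ)^2 - θ*(n:ℝ)^2))]
    congr 1; ring
  have hba : N - (M + 1) = N - M - 1 := by omega
  rw [hba, hdiag]
  have hbound : ∀ d ∈ Finset.Icc 1 (N - M - 1),
      ∑ n ∈ Finset.Icc (M + 1 + d) N, f n (n - d) ≤ 1 / |Real.sin (2*Real.pi*θ*(d:ℝ))| := by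
    intro d hd
    rw [Finset.mem_Icc] at hd
    have hsin : Real.sin (2*Real.pi*θ*(d:ℝ)) ≠ 0 :=
      sin_ne_zero_of θ d (hθ d hd.1 hd.2)
    exact inner_bound θ d (M+1+d) N hsin (by omega)
  have h4 : (∑ d ∈ Finset.Icc 1 (N - M - 1), ∑ n ∈ Finset.Icc (M + 1 + d) N, f n (n - d))
        + (∑ d ∈ Finset.Icc 1 (N - M - 1), ∑ n ∈ Finset.Icc (M + 1 + d) N, f (n - d) n)
      ≤ 2 * ∑ p ∈ Finset.Icc 1 (N - M - 1), 1 / |Real.sin (2 * Real.pi * θ * (p : ℝ))| := by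
    have e1 : (∑ d ∈ Finset.Icc 1 (N - M - 1), ∑ n ∈ Finset.Icc (M + 1 + d) N, f (n - d) n)
        = ∑ d ∈ Finset.Icc 1 (N - M - 1), ∑ n ∈ Finset.Icc (M + 1 + d) N, f n (n - d) := by
      apply Finset.sum_congr rfl
      intro d _
      exact Finset.sum_congr rfl fun n _ => hsym d n
    rw [e1, ← two_mul]
    have h5 : (∑ d ∈ Finset.Icc 1 (N - M - 1), ∑ n ∈ Finset.Icc (M + 1 + d) N, f n (n - d))
        ≤ ∑ p ∈ Finset.Icc 1 (N - M - 1), 1 / |Real.sin (2 * Real.pi * θ * (p : ℝ))| :=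
      Finset.sum_le_sum hbound
    linarith
  linarith
end
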